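/- Let ρ be a real number with 0 < ρ < 1, let α : ℕ → ℝ satisfy 0 < α t ≤ 1 for all t ≥ 1, let c : ℕ → ℝ satisfy 0 ≤ c 0 ≤ 1 and c (t+1) = c t + α (t+1)(1 − c t), and let u : ℕ → ℝ satisfy u 0 ≥ 0 and u (t+1) = ρ(1 − c (t+1)) u t. Define the order-gap sequence Ω (t+1) = ρ · α (t+1) · (1 − c t) · u t. Then Ω (t+1) ≤ ρ^{t+1} · (1 − c 0) · u 0 for every t, and Ω t tends to 0 as t → ∞. -/
import Mathlib


open Filter

/-- Geometric decay of the order-gap along the coupled dynamics of the paper's closed-form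
example: with `Ω (t+1) = ρ * α (t+1) * (1 − c t) * u t`, the order-gap satisfies
`Ω (t+1) ≤ ρ^(t+1) * (1 − c 0) * u 0` and tends to `0`. -/
theorem order_gap_decay
    (ρ : ℝ) (hρ0 : 0 < ρ) (hρ1 : ρ < 1)
    (α : ℕ → ℝ) (hα : ∀ t, 1 ≤ t → 0 < α t ∧ α t ≤ 1)
    (c : ℕ → ℝ) (hc0 : 0 ≤ c 0) (hc0' : c 0 ≤ 1)
    (hcrec : ∀ t, c (t + 1) = c t + α (t + 1) * (1 - c t))
    (u : ℕ → ℝ) (hu0 : 0 ≤ u 0)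
    (hurec : ∀ t, u (t + 1) = ρ * (1 - c (t + 1)) * u t)
    (Ω : ℕ → ℝ)
    (hΩ : ∀ t, Ω (t + 1) = ρ * α (t + 1) * (1 - c t) * u t) :
    (∀ t, Ω (t + 1) ≤ ρ ^ (t + 1) * (1 - c 0) * u 0) ∧
      Tendsto Ω atTop (nhds 0) := by
  have hc : ∀ t, 0 ≤ c t ∧ c t ≤ 1 := by
    intro t
    induction t with
    | zero => exact ⟨hc0, hc0'⟩
    | succ n ih =>
      obtain ⟨hα1, hα2⟩ := hα (n + 1) (Nat.le_add_left 1 n)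
      rw [hcrec n]
      constructor
      · nlinarith [ih.1, ih.2]
      · nlinarith [ih.1, ih.2]
  have hu : ∀ t, 0 ≤ u t := by
    intro t
    induction t with
    | zero => exact hu0
    | succ n ih =>
      rw [hurec n]
      have h1 : 0 ≤ 1 - c (n + 1) := by linarith [(hc (n + 1)).2]
      positivity
  have hD : ∀ t, (1 - c t) * u t ≤ ρ ^ t * ((1 - c 0) * u 0) := by
    intro t
    induction t with
    | zero => simp
    | succ n ih =>
      have hcn := hc n
      have hcn1 := hc (n + 1)
      have hun := hu n
      have hmono : 1 - c (n + 1) ≤ 1 - c n := by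
        obtain ⟨hα1, hα2⟩ := hα (n + 1) (Nat.le_add_left 1 n)
        rw [hcrec n]; nlinarith [hcn.2]
      calc (1 - c (n + 1)) * u (n + 1)
          = ρ * ((1 - c (n + 1)) * (1 - c (n + 1)) * u n) := by rw [hurec n]; ring
        _ ≤ ρ * ((1 - c n) * u n) := by
            apply mul_le_mul_of_nonneg_left _ hρ0.le
            have h1 : 0 ≤ 1 - c (n + 1) := by linarith [hcn1.2]
            have h2 : (1 - c (n + 1)) * (1 - c (n + 1)) ≤ 1 - c n := by
              nlinarith [mul_nonneg h1 hcn1.1, hmono]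
            exact mul_le_mul_of_nonneg_right h2 hun
        _ ≤ ρ * (ρ ^ n * ((1 - c 0) * u 0)) := by
            apply mul_le_mul_of_nonneg_left ih hρ0.le
        _ = ρ ^ (n + 1) * ((1 - c 0) * u 0) := by ring
  have hbound : ∀ t, Ω (t + 1) ≤ ρ ^ (t + 1) * (1 - c 0) * u 0 := by
    intro t
    obtain ⟨hα1, hα2⟩ := hα (t + 1) (Nat.le_add_left 1 t)
    have hct := hc t
    have hut := hu t
    have := hD t
    rw [hΩ t]
    calc ρ * α (t + 1) * (1 - c t) * u t
        ≤ ρ * 1 * ((1 - c t) * u t) := by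
          have h1c : 0 ≤ 1 - c t := by linarith [hct.2]
          nlinarith [hα2, mul_nonneg (mul_nonneg hρ0.le h1c) hut]
      _ ≤ ρ * (ρ ^ t * ((1 - c 0) * u 0)) := by
          rw [mul_one]; exact mul_le_mul_of_nonneg_left (hD t) hρ0.le
      _ = ρ ^ (t + 1) * (1 - c 0) * u 0 := by ring
  refine ⟨hbound, ?_⟩
  have hnn : ∀ t, 0 ≤ Ω (t + 1) := by
    intro t
    obtain ⟨hα1, hα2⟩ := hα (t + 1) (Nat.le_add_left 1 t)
    rw [hΩ t]
    have h1 := (hc t).2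
    have h2 := hu t
    have : 0 ≤ 1 - c t := by linarith
    positivity
  have htends : Tendsto (fun t : ℕ => ρ ^ t * (1 - c 0) * u 0) atTop (nhds 0) := by
    have h := tendsto_pow_atTop_nhds_zero_of_lt_one hρ0.le hρ1
    have := (h.mul_const (1 - c 0)).mul_const (u 0)
    simpa using this
  apply squeeze_zero' ?_ ?_ htends
  · filter_upwards [eventually_ge_atTop 1] with t ht
    obtain ⟨n, rfl⟩ := Nat.exists_eq_add_of_le ht
    rw [Nat.add_comm]; exact hnn n
  · filter_upwards [eventually_ge_atTop 1] with t ht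
    obtain ⟨n, rfl⟩ := Nat.exists_eq_add_of_le ht
    calc Ω (1 + n) = Ω (n + 1) := by rw [Nat.add_comm]
      _ ≤ ρ ^ (n + 1) * (1 - c 0) * u 0 := hbound n
      _ = ρ ^ (1 + n) * (1 - c 0) * u 0 := by rw [Nat.add_comm]
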